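/- Assume x_{k+1} = A_k x_k admits a nonuniform exponential dichotomy with constants K ≥ 1, 0 < α < 1, ε ≥ 1 and invariant projector P with P_k ≠ 0 and P_k ≠ Id. Then the equation is weakly kinematically similar to a decoupled block-diagonal system x_{k+1} = diag(B¹_k, B²_k) x_k, where B¹ : ℤ → ℝ^{N₁×N₁} and B² : ℤ → ℝ^{N₂×N₂} with N₁ = rank P_k and N₂ = N − N₁; that is, the equation is reducible. -/

import Mathlib

open Matrix

attribute [local instance] Matrix.linftyOpNormedAddCommGroup

abbrev Mat (N : ℕ) := Matrix (Fin N) (Fin N) ℝ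

noncomputable def fundSolNat {N : ℕ} (A : ℤ → GL (Fin N) ℝ) : ℕ → GL (Fin N) ℝ
  | 0 => 1
  | n + 1 => A (n : ℤ) * fundSolNat A n

noncomputable def fundSolNeg {N : ℕ} (A : ℤ → GL (Fin N) ℝ) : ℕ → GL (Fin N) ℝ
  | 0 => (A (-1))⁻¹
  | n + 1 => (A (Int.negSucc (n + 1)))⁻¹ * fundSolNeg A n

noncomputable def fundSol {N : ℕ} (A : ℤ → GL (Fin N) ℝ) : ℤ → GL (Fin N) ℝ
  | Int.ofNat n => fundSolNat A n
  | Int.negSucc n => fundSolNeg A n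

/-- The evolution operator `Φ(k,l)` of `x_{k+1} = A_k x_k`. -/
noncomputable def evol {N : ℕ} (A : ℤ → GL (Fin N) ℝ) (k l : ℤ) : Mat N :=
  ↑(fundSol A k * (fundSol A l)⁻¹)

def IsInvariantProjector {N : ℕ} (A : ℤ → GL (Fin N) ℝ) (P : ℤ → Mat N) : Prop :=
  (∀ k, P k * P k = P k) ∧ ∀ k, P (k + 1) * (A k : Mat N) = (A k : Mat N) * P k

/-- Evolution operator `Φ_γ(k,l) = γ^{-(k-l)} Φ(k,l)` of `x_{k+1} = (1/γ) A_k x_k`. -/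
noncomputable def evolW {N : ℕ} (A : ℤ → GL (Fin N) ℝ) (γ : ℝ) (k l : ℤ) : Mat N :=
  γ ^ (l - k) • evol A k l

def NEDWith {N : ℕ} (A : ℤ → GL (Fin N) ℝ) (γ : ℝ) (P : ℤ → Mat N) (K α ε : ℝ) : Prop :=
  IsInvariantProjector A P ∧ 1 ≤ K ∧ 0 < α ∧ α < 1 ∧ 1 ≤ ε ∧
    (∀ k l : ℤ, l ≤ k → ‖evolW A γ k l * P l‖ ≤ K * α ^ (k - l) * ε ^ l) ∧
    (∀ k l : ℤ, k ≤ l → ‖evolW A γ k l * (1 - P l)‖ ≤ K * (1 / α) ^ (k - l) * ε ^ l)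

def HasNED {N : ℕ} (A : ℤ → GL (Fin N) ℝ) (γ : ℝ) : Prop :=
  ∃ P K α ε, NEDWith A γ P K α ε

def HasStrongNED {N : ℕ} (A : ℤ → GL (Fin N) ℝ) (γ : ℝ) : Prop :=
  ∃ P K α ε, NEDWith A γ P K α ε ∧ α * ε ^ 2 < 1

def HasED {N : ℕ} (A : ℤ → GL (Fin N) ℝ) (γ : ℝ) : Prop :=
  ∃ P K α, NEDWith A γ P K α 1

def SigmaNED {N : ℕ} (A : ℤ → GL (Fin N) ℝ) : Set ℝ := {γ | 0 < γ ∧ ¬ HasStrongNED A γ}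

def rhoNED {N : ℕ} (A : ℤ → GL (Fin N) ℝ) : Set ℝ := {γ | 0 < γ ∧ HasStrongNED A γ}

def SigmaED {N : ℕ} (A : ℤ → GL (Fin N) ℝ) : Set ℝ := {γ | 0 < γ ∧ ¬ HasED A γ}

def stableSet {N : ℕ} (A : ℤ → GL (Fin N) ℝ) (γ ε : ℝ) (l : ℤ) : Set (Fin N → ℝ) :=
  {ξ | ∃ C : ℝ, ∀ k : ℤ, l ≤ k → ‖(evol A k l).mulVec ξ‖ * γ ^ (-k) * ε ^ (-l) ≤ C}

def unstableSet {N : ℕ} (A : ℤ → GL (Fin N) ℝ) (γ ε : ℝ) (l : ℤ) : Set (Fin N → ℝ) :=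
  {ξ | ∃ C : ℝ, ∀ k : ℤ, k ≤ l → ‖(evol A k l).mulVec ξ‖ * γ ^ (-k) * ε ^ (-l) ≤ C}

/-- `S : ℤ → GL(N,ℝ)` is weakly non-degenerate with respect to `ε` if
`‖S_k‖ ≤ M ε^{|k|}` and `‖S_k⁻¹‖ ≤ M ε^{|k|}` for some `M > 0`. -/
def WeaklyNonDegenerate {N : ℕ} (S : ℤ → GL (Fin N) ℝ) (ε : ℝ) : Prop :=
  ∃ M : ℝ, 0 < M ∧ ∀ k : ℤ,
    ‖(S k : Mat N)‖ ≤ M * ε ^ |k| ∧ ‖((S k)⁻¹ : Mat N)‖ ≤ M * ε ^ |k|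

/-- `x_{k+1} = A_k x_k` is weakly kinematically similar to `y_{k+1} = B_k y_k`
(with respect to `ε`) if `S_{k+1} B_k = A_k S_k` for a weakly non-degenerate `S`. -/
def WeaklyKinematicallySimilar {N : ℕ} (A B : ℤ → GL (Fin N) ℝ) (ε : ℝ) : Prop :=
  ∃ S : ℤ → GL (Fin N) ℝ, WeaklyNonDegenerate S ε ∧
    ∀ k : ℤ, (S (k + 1) : Mat N) * (B k : Mat N) = (A k : Mat N) * (S k : Mat N)

open NNReal

lemma exists_onb_cols {N : ℕ} (Q : Mat N) (hQ : Q * Q = Q) :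
    ∃ U : Matrix (Fin N) (Fin Q.rank) ℝ,
      Q * U = U ∧ Uᵀ * U = 1 ∧ ∀ i c, |U i c| ≤ 1 := by
  classical
  let E := EuclideanSpace ℝ (Fin N)
  let L : (Fin N → ℝ) ≃ₗ[ℝ] E := (WithLp.linearEquiv 2 ℝ (Fin N → ℝ)).symm
  let W : Submodule ℝ E := (LinearMap.range Q.mulVecLin).map (L : (Fin N → ℝ) →ₗ[ℝ] E)
  have hfr : Module.finrank ℝ W = Q.rank := by
    exact L.finrank_map_eq (LinearMap.range Q.mulVecLin)
  let b : OrthonormalBasis (Fin Q.rank) ℝ W :=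
    (stdOrthonormalBasis ℝ W).reindex (finCongr hfr)
  let v : Fin Q.rank → (Fin N → ℝ) := fun c => L.symm ((b c : W) : E)
  have hmem : ∀ c, v c ∈ LinearMap.range Q.mulVecLin := by
    intro c
    have : ((b c : W) : E) ∈ W := (b c).2
    obtain ⟨x, hx, hx2⟩ := this
    simpa [v, ← hx2] using hx
  have hfix : ∀ c, Q.mulVec (v c) = v c := by
    intro c
    obtain ⟨x, hx⟩ := hmem c
    rw [Matrix.mulVecLin_apply] at hx
    rw [← hx, Matrix.mulVec_mulVec, hQ]
  have hUtU : ∀ c d, ∑ i, v c i * v d i = if c = d then 1 else 0 := by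
    intro c d
    have horth := orthonormal_iff_ite.mp b.orthonormal c d
    have hinner : (inner ℝ (b c) (b d) : ℝ) = ∑ i, v c i * v d i := by
      rw [Submodule.coe_inner, PiLp.inner_apply]
      simp only [RCLike.inner_apply, starRingEnd_apply, star_trivial]
      exact Finset.sum_congr rfl (fun i _ => mul_comm _ _)
    rw [← hinner, horth]
  refine ⟨Matrix.of fun i c => v c i, ?_, ?_, ?_⟩
  · ext i c
    simpa [Matrix.mul_apply, Matrix.mulVec, dotProduct] using congrFun (hfix c) i
  · ext c d
    simpa [Matrix.mul_apply, Matrix.one_apply] using hUtU c d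
  · intro i c
    have h1 := hUtU c c
    simp only [if_pos rfl] at h1
    have hle : (v c i) * (v c i) ≤ 1 := by
      calc (v c i) * (v c i) ≤ ∑ j, v c j * v c j :=
            Finset.single_le_sum (f := fun j => v c j * v c j)
              (fun j _ => mul_self_nonneg _) (Finset.mem_univ i)
        _ = 1 := h1
    show |v c i| ≤ 1
    rw [abs_le]; constructor <;> nlinarith

lemma exists_onb_cols' {N r : ℕ} (Q : Mat N) (hQ : Q * Q = Q) (hr : Q.rank = r) :
    ∃ U : Matrix (Fin N) (Fin r) ℝ,
      Q * U = U ∧ Uᵀ * U = 1 ∧ ∀ i c, |U i c| ≤ 1 := by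
  subst hr; exact exists_onb_cols Q hQ

lemma rank_add_rank_compl {N : ℕ} (Q : Mat N) (hQ : Q * Q = Q) :
    Q.rank + (1 - Q).rank = N := by
  have hker : LinearMap.range (1 - Q).mulVecLin = LinearMap.ker Q.mulVecLin := by
    ext x
    constructor
    · rintro ⟨y, rfl⟩
      simp only [LinearMap.mem_ker, Matrix.mulVecLin_apply, Matrix.mulVec_mulVec]
      rw [Matrix.mul_sub, Matrix.mul_one, hQ, sub_self, Matrix.zero_mulVec]
    · intro hx
      simp only [LinearMap.mem_ker, Matrix.mulVecLin_apply] at hx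
      exact ⟨x, by simp [Matrix.sub_mulVec, Matrix.one_mulVec, hx]⟩
  have := LinearMap.finrank_range_add_finrank_ker Q.mulVecLin
  rw [Matrix.rank, Matrix.rank, hker, this]
  simp

lemma entry_le_linfty {m n : Type*} [Fintype m] [Fintype n] (A : Matrix m n ℝ) (i : m) (j : n) :
    |A i j| ≤ ‖A‖ := by
  have h1 : ‖A i j‖₊ ≤ ∑ j', ‖A i j'‖₊ :=
    Finset.single_le_sum (f := fun j' => ‖A i j'‖₊) (fun _ _ => zero_le) (Finset.mem_univ j)
  have h2 : (∑ j', ‖A i j'‖₊) ≤ (Finset.univ : Finset m).sup fun i => ∑ j', ‖A i j'‖₊ :=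
    Finset.le_sup (f := fun i => ∑ j', ‖A i j'‖₊) (Finset.mem_univ i)
  rw [Matrix.linfty_opNorm_def]
  have h3 : |A i j| = ((‖A i j‖₊ : ℝ)) := by simp [Real.norm_eq_abs]
  rw [h3]
  exact_mod_cast h1.trans h2

lemma linfty_le_of_entries {m n : Type*} [Fintype m] [Fintype n] (A : Matrix m n ℝ) (c : ℝ)
    (hc : 0 ≤ c) (h : ∀ i j, |A i j| ≤ c) : ‖A‖ ≤ (Fintype.card n : ℝ) * c := by
  rw [Matrix.linfty_opNorm_def]
  have key : ((Finset.univ : Finset m).sup fun i => ∑ j', ‖A i j'‖₊) ≤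
      (Fintype.card n : ℝ≥0) * c.toNNReal := by
    apply Finset.sup_le
    intro i _
    calc (∑ j', ‖A i j'‖₊) ≤ ∑ _j' : n, c.toNNReal := by
          apply Finset.sum_le_sum
          intro j _
          refine NNReal.coe_le_coe.mp ?_
          rw [coe_nnnorm, Real.coe_toNNReal c hc]
          simpa [Real.norm_eq_abs] using h i j
      _ = (Fintype.card n : ℝ≥0) * c.toNNReal := by simp [mul_comm]
  calc (((Finset.univ : Finset m).sup fun i => ∑ j', ‖A i j'‖₊ : ℝ≥0) : ℝ) ≤
      (((Fintype.card n : ℝ≥0) * c.toNNReal : ℝ≥0) : ℝ) := by exact_mod_cast key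
    _ = (Fintype.card n : ℝ) * c := by
        push_cast [Real.coe_toNNReal _ hc]
        ring

set_option maxHeartbeats 1600000 in
theorem reducible_of_NED {N : ℕ} (A : ℤ → GL (Fin N) ℝ)
    (P : ℤ → Mat N) (K α ε : ℝ) (h : NEDWith A 1 P K α ε)
    (hP : ∀ k : ℤ, P k ≠ 0 ∧ P k ≠ 1) :
    ∃ B : ℤ → GL (Fin N) ℝ,
      WeaklyKinematicallySimilar A B ε ∧
      ∀ (k : ℤ) (i j : Fin N),
        ¬(((i : ℕ) < (P 0).rank) ↔ ((j : ℕ) < (P 0).rank)) → (B k : Mat N) i j = 0 := by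
  classical
  obtain ⟨⟨hidem, hinv⟩, hK, hα, hα1, hε, hb1, hb2⟩ := h
  have hε0 : (0:ℝ) < ε := lt_of_lt_of_le one_pos hε
  -- norm of P
  have hPnorm : ∀ l : ℤ, ‖P l‖ ≤ K * ε ^ l := by
    intro l
    have := hb1 l l le_rfl
    simp only [evolW, evol, sub_self, zpow_zero, one_smul, mul_inv_cancel, Units.val_one,
      one_mul, _root_.one_zpow] at this
    simpa using this
  have hPnorm' : ∀ l : ℤ, ‖P l‖ ≤ K * ε ^ |l| := by
    intro l
    refine (hPnorm l).trans ?_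
    have : ε ^ l ≤ ε ^ |l| := zpow_le_zpow_right₀ hε (le_abs_self l)
    nlinarith [norm_nonneg (P l)]
  -- rank constancy
  have hdet : ∀ k : ℤ, IsUnit ((A k : Mat N)).det := fun k =>
    (Matrix.isUnit_iff_isUnit_det _).mp (A k).isUnit
  have hstep : ∀ k : ℤ, (P (k + 1)).rank = (P k).rank := by
    intro k
    have h1 : (P (k+1) * (A k : Mat N)).rank = (P (k+1)).rank :=
      Matrix.rank_mul_eq_left_of_isUnit_det _ _ (hdet k)
    have h2 : ((A k : Mat N) * P k).rank = (P k).rank :=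
      Matrix.rank_mul_eq_right_of_isUnit_det _ _ (hdet k)
    rw [← h1, hinv k, h2]
  have hrank : ∀ k : ℤ, (P k).rank = (P 0).rank := by
    intro k
    induction k using Int.induction_on with
    | zero => rfl
    | succ n ih => rw [hstep n]; exact ih
    | pred n ih =>
        have hh := hstep (-(n:ℤ) - 1)
        have h2 : (-(n:ℤ) - 1 + 1) = -(n:ℤ) := by ring
        rw [h2] at hh
        rw [← hh]
        exact ih
  set N₁ := (P 0).rank with hN₁
  have hcompl : ∀ k : ℤ, (1 - P k) * (1 - P k) = 1 - P k := by
    intro k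
    simp only [Matrix.sub_mul, Matrix.mul_sub, Matrix.one_mul, Matrix.mul_one, hidem k]
    abel
  have hN₁le : N₁ ≤ N := by
    have := (P 0).rank_le_card_width
    simpa using this
  have hrank2 : ∀ k : ℤ, (1 - P k).rank = N - N₁ := by
    intro k
    have := rank_add_rank_compl (P k) (hidem k)
    rw [hrank k] at this
    omega
  -- orthonormal columns
  choose U hU1 hU2 hU3 using fun k : ℤ => exists_onb_cols' (P k) (hidem k) (hrank k)
  choose V hV1 hV2 hV3 using fun k : ℤ => exists_onb_cols' (1 - P k) (hcompl k) (hrank2 k)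
  have hPV : ∀ k, P k * V k = 0 := by
    intro k
    have : P k * ((1 - P k) * V k) = (P k * (1 - P k)) * V k := by rw [Matrix.mul_assoc]
    rw [hV1 k] at this
    rw [this, Matrix.mul_sub, Matrix.mul_one, hidem k, sub_self, Matrix.zero_mul]
  have hPU0 : ∀ k, (1 - P k) * U k = 0 := by
    intro k
    rw [Matrix.sub_mul, Matrix.one_mul, hU1 k, sub_self]
  -- index equivalence
  have hsum : N₁ + (N - N₁) = N := by omega
  let e : Fin N₁ ⊕ Fin (N - N₁) ≃ Fin N := finSumFinEquiv.trans (finCongr hsum)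
  -- the transformation
  let S : ℤ → Mat N := fun k => (fromCols (U k) (V k)).submatrix id e.symm
  let T : ℤ → Mat N := fun k =>
    (fromRows ((U k)ᵀ * P k) ((V k)ᵀ * (1 - P k))).submatrix (⇑e.symm) id
  have hTS : ∀ k, T k * S k = 1 := by
    intro k
    have : T k * S k = ((fromRows ((U k)ᵀ * P k) ((V k)ᵀ * (1 - P k))) *
        (fromCols (U k) (V k))).submatrix (⇑e.symm) (⇑e.symm) := by
      rw [← Matrix.submatrix_mul_equiv _ _ _ (Equiv.refl _) _]
      rfl
    rw [this, Matrix.fromRows_mul_fromCols]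
    have e1 : (U k)ᵀ * P k * U k = 1 := by rw [Matrix.mul_assoc, hU1 k, hU2 k]
    have e2 : (U k)ᵀ * P k * V k = 0 := by rw [Matrix.mul_assoc, hPV k, Matrix.mul_zero]
    have e3 : (V k)ᵀ * (1 - P k) * U k = 0 := by rw [Matrix.mul_assoc, hPU0 k, Matrix.mul_zero]
    have e4 : (V k)ᵀ * (1 - P k) * V k = 1 := by rw [Matrix.mul_assoc, hV1 k, hV2 k]
    rw [e1, e2, e3, e4, Matrix.fromBlocks_one, Matrix.submatrix_one_equiv]
  have hST : ∀ k, S k * T k = 1 := fun k => mul_eq_one_comm.mp (hTS k)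
  let Sgl : ℤ → GL (Fin N) ℝ := fun k => ⟨S k, T k, hST k, hTS k⟩
  -- the projector Q
  let Qm : Mat N := (fromBlocks (1 : Matrix (Fin N₁) (Fin N₁) ℝ) 0 0 0).submatrix (⇑e.symm) (⇑e.symm)
  have hSQ : ∀ k, S k * Qm = P k * S k := by
    intro k
    have lhs : S k * Qm = _ :=
      Matrix.submatrix_mul_equiv (fromCols (U k) (V k)) (fromBlocks 1 0 0 0) id e.symm e.symm
    have rhs : ((P k * U k).fromCols (P k * V k)).submatrix id (⇑e.symm) = P k * S k := by
      have := Matrix.submatrix_mul_equiv (P k) (fromCols (U k) (V k)) id (Equiv.refl (Fin N)) (⇑e.symm)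
      simpa using this.symm
    rw [lhs, ← rhs, Matrix.fromCols_mul_fromBlocks, hU1 k, hPV k]
    simp
  -- entries of Qm
  have heL : ∀ a : Fin N₁, ((e (Sum.inl a)) : ℕ) = (a : ℕ) := by
    intro a; simp [e]
  have heR : ∀ b : Fin (N - N₁), ((e (Sum.inr b)) : ℕ) = N₁ + (b : ℕ) := by
    intro b; simp [e]
  have hQme : ∀ i j : Fin N, Qm i j = if i = j ∧ (i : ℕ) < N₁ then 1 else 0 := by
    intro i j
    have hi' := e.apply_symm_apply i
    have hj' := e.apply_symm_apply j
    show (fromBlocks 1 0 0 0) (e.symm i) (e.symm j) = _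
    rcases hi : e.symm i with a | b <;> rcases hj : e.symm j with a' | b' <;>
      rw [hi] at hi' <;> rw [hj] at hj'
    · have hiv : (i:ℕ) = (a:ℕ) := by rw [← hi', heL]
      have hlt : (i:ℕ) < N₁ := by rw [hiv]; exact a.isLt
      have hij : (i = j) ↔ (a = a') := by
        constructor
        · intro hh
          rw [← hi', ← hj'] at hh
          simpa using e.injective hh
        · intro hh; rw [← hi', ← hj', hh]
      have hjlt : (j:ℕ) < N₁ := by rw [← hj', heL]; exact a'.isLt
      by_cases hh : a = a'
      · simp [Matrix.fromBlocks, Matrix.one_apply, hh, hij.mpr hh, hlt, hjlt]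
      · have hne : i ≠ j := fun hc => hh (hij.mp hc)
        simp [Matrix.fromBlocks, Matrix.one_apply, hh, hne]
    · have hne : i ≠ j := by
        intro hh
        rw [← hi', ← hj'] at hh
        simpa using e.injective hh
      simp [Matrix.fromBlocks, hne]
    · have hne : i ≠ j := by
        intro hh
        rw [← hi', ← hj'] at hh
        simpa using e.injective hh
      simp [Matrix.fromBlocks, hne]
    · have hiv : (i:ℕ) = N₁ + (b:ℕ) := by rw [← hi', heR]
      have hlt : ¬ (i:ℕ) < N₁ := by omega
      simp [Matrix.fromBlocks, hlt]
  -- key algebra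
  have hQ1 : ∀ k, Qm = T k * (P k * S k) := by
    intro k
    rw [← hSQ k, ← Matrix.mul_assoc, hTS k, Matrix.one_mul]
  have hQT : ∀ k, Qm * T k = T k * P k := by
    intro k
    rw [hQ1 k, Matrix.mul_assoc, Matrix.mul_assoc, hST k, Matrix.mul_one]
  have hcomm : ∀ k, Qm * (T (k+1) * ((A k : Mat N) * S k)) =
      T (k+1) * ((A k : Mat N) * S k) * Qm := by
    intro k
    calc Qm * (T (k+1) * ((A k : Mat N) * S k))
        = (Qm * T (k+1)) * ((A k : Mat N) * S k) := by rw [Matrix.mul_assoc]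
      _ = (T (k+1) * P (k+1)) * ((A k : Mat N) * S k) := by rw [hQT (k+1)]
      _ = T (k+1) * ((P (k+1) * (A k : Mat N)) * S k) := by simp only [Matrix.mul_assoc]
      _ = T (k+1) * (((A k : Mat N) * P k) * S k) := by rw [hinv k]
      _ = T (k+1) * ((A k : Mat N) * (S k * Qm)) := by rw [Matrix.mul_assoc, ← hSQ k]
      _ = T (k+1) * ((A k : Mat N) * S k) * Qm := by simp only [Matrix.mul_assoc]
  -- norm bounds
  have hSentry : ∀ (k : ℤ) (i j : Fin N), |S k i j| ≤ 1 := by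
    intro k i j
    show |fromCols (U k) (V k) i (e.symm j)| ≤ 1
    rcases hj : e.symm j with a | b
    · rw [Matrix.fromCols_apply_inl]; exact hU3 k i a
    · rw [Matrix.fromCols_apply_inr]; exact hV3 k i b
  have hTentry : ∀ (k : ℤ) (i j : Fin N), |T k i j| ≤ (N:ℝ) * (1 + ‖P k‖) := by
    intro k i j
    show |fromRows ((U k)ᵀ * P k) ((V k)ᵀ * (1 - P k)) (e.symm i) j| ≤ _
    rcases hi : e.symm i with a | b
    · rw [Matrix.fromRows_apply_inl]
      calc |((U k)ᵀ * P k) a j| = |∑ m, U k m a * P k m j| := by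
            simp [Matrix.mul_apply, Matrix.transpose_apply]
        _ ≤ ∑ m, |U k m a * P k m j| := Finset.abs_sum_le_sum_abs _ _
        _ ≤ ∑ _m : Fin N, (1 + ‖P k‖) := by
            apply Finset.sum_le_sum; intro m _
            rw [abs_mul]
            have h1 := hU3 k m a
            have h2 := entry_le_linfty (P k) m j
            nlinarith [abs_nonneg (U k m a), abs_nonneg (P k m j), norm_nonneg (P k)]
        _ = (N:ℝ) * (1 + ‖P k‖) := by simp; ring
    · rw [Matrix.fromRows_apply_inr]
      calc |(((V k)ᵀ * (1 - P k) : Matrix (Fin (N - N₁)) (Fin N) ℝ)) b j| = |∑ m, V k m b * (1 - P k) m j| := by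
            simp [Matrix.mul_apply, Matrix.transpose_apply]
        _ ≤ ∑ m, |V k m b * (1 - P k) m j| := Finset.abs_sum_le_sum_abs _ _
        _ ≤ ∑ _m : Fin N, (1 + ‖P k‖) := by
            apply Finset.sum_le_sum; intro m _
            rw [abs_mul]
            have h1 := hV3 k m b
            have h2 := entry_le_linfty (P k) m j
            have h3 : |(1 - P k) m j| ≤ 1 + |P k m j| := by
              have : (1 - P k) m j = (if m = j then (1:ℝ) else 0) - P k m j := by
                simp [Matrix.sub_apply, Matrix.one_apply]
              rw [this]
              have h4 : |(if m = j then (1:ℝ) else 0)| ≤ 1 := by split <;> simp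
              calc |(if m = j then (1:ℝ) else 0) - P k m j| ≤
                  |(if m = j then (1:ℝ) else 0)| + |P k m j| := abs_sub _ _
                _ ≤ 1 + |P k m j| := by linarith
            nlinarith [abs_nonneg (V k m b), abs_nonneg (P k m j), abs_nonneg ((1 - P k) m j),
              norm_nonneg (P k)]
        _ = (N:ℝ) * (1 + ‖P k‖) := by simp; ring
  set M : ℝ := ((N:ℝ)^2 + (N:ℝ) + 1) * (1 + K) with hMdef
  have hM0 : 0 < M := by positivity
  have hbounds : ∀ k : ℤ, ‖S k‖ ≤ M * ε ^ |k| ∧ ‖T k‖ ≤ M * ε ^ |k| := by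
    intro k
    have hek : (1:ℝ) ≤ ε ^ |k| := one_le_zpow₀ hε (abs_nonneg k)
    have hPk := hPnorm' k
    have hPk0 := norm_nonneg (P k)
    constructor
    · have := linfty_le_of_entries (S k) 1 zero_le_one (hSentry k)
      simp only [Fintype.card_fin, mul_one] at this
      refine this.trans ?_
      nlinarith
    · have hc0 : (0:ℝ) ≤ (N:ℝ) * (1 + ‖P k‖) := by positivity
      have := linfty_le_of_entries (T k) ((N:ℝ) * (1 + ‖P k‖)) hc0 (hTentry k)
      simp only [Fintype.card_fin] at this
      refine this.trans ?_
      nlinarith [sq_nonneg (N:ℝ)]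
  -- conclusion
  refine ⟨fun k => (Sgl (k+1))⁻¹ * A k * Sgl k, ⟨Sgl, ⟨M, hM0, fun k => ?_⟩, fun k => ?_⟩, ?_⟩
  · refine ⟨(hbounds k).1, ?_⟩
    have hco : ((Sgl k : Mat N))⁻¹ = T k := by
      rw [← Matrix.coe_units_inv]
      rfl
    rw [hco]
    exact (hbounds k).2
  · show S (k+1) * (((Sgl (k+1))⁻¹ * A k * Sgl k : GL (Fin N) ℝ) : Mat N) = (A k : Mat N) * S k
    rw [Units.val_mul, Units.val_mul]
    show S (k+1) * (T (k+1) * (A k : Mat N) * S k) = (A k : Mat N) * S k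
    rw [← Matrix.mul_assoc, ← Matrix.mul_assoc, hST (k+1), Matrix.one_mul]
  · intro k i j hij
    have hBval : (((Sgl (k+1))⁻¹ * A k * Sgl k : GL (Fin N) ℝ) : Mat N) =
        T (k+1) * ((A k : Mat N) * S k) := by
      rw [Units.val_mul, Units.val_mul]
      show T (k+1) * (A k : Mat N) * S k = _
      rw [Matrix.mul_assoc]
    rw [hBval]
    set Bm : Mat N := T (k+1) * ((A k : Mat N) * S k) with hBm
    have hc : (Qm * Bm) i j = (Bm * Qm) i j := by rw [hcomm k]
    by_cases hi : (i:ℕ) < N₁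
    · have hjge : ¬ (j:ℕ) < N₁ := fun hjlt => hij ⟨fun _ => hjlt, fun _ => hi⟩
      have hl : (Qm * Bm) i j = Bm i j := by
        rw [Matrix.mul_apply]
        rw [Finset.sum_congr rfl (fun m _ => by rw [hQme i m])]
        simp [hi]
      have hr : (Bm * Qm) i j = 0 := by
        rw [Matrix.mul_apply]
        rw [Finset.sum_congr rfl (fun m _ => by rw [hQme m j])]
        apply Finset.sum_eq_zero
        intro m _
        rcases eq_or_ne m j with rfl | hmj
        · simp [hjge]
        · simp [hmj]
      rw [hl, hr] at hc
      exact hc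
    · have hjlt : (j:ℕ) < N₁ := by
        by_contra hjge
        exact hij ⟨fun hh => absurd hh hi, fun hh => absurd hh hjge⟩
      have hl : (Qm * Bm) i j = 0 := by
        rw [Matrix.mul_apply]
        rw [Finset.sum_congr rfl (fun m _ => by rw [hQme i m])]
        apply Finset.sum_eq_zero
        intro m _
        simp [hi]
      have hr : (Bm * Qm) i j = Bm i j := by
        rw [Matrix.mul_apply]
        rw [Finset.sum_congr rfl (fun m _ => by rw [hQme m j])]
        have : ∀ m : Fin N, Bm i m * (if m = j ∧ (m:ℕ) < N₁ then 1 else 0) =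
            Bm i m * (if m = j then 1 else 0) := by
          intro m
          rcases eq_or_ne m j with rfl | hmj
          · simp [hjlt]
          · simp [hmj]
        rw [Finset.sum_congr rfl (fun m _ => this m)]
        simp
      rw [hl, hr] at hc
      exact hc.symm
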